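/- arXiv:math/0008020 — 2 statements merged into one kernel-verified Lean document; each statement's English description precedes it below -/
import Mathlib

section
/- Let s be a partition having a slippery plateau of length l at 1 (l ≥ 2) and a cliff at l+1. Let t be the partition with s →_{l+1} t (a fall) and u the partition with t →_l u (a fall). Then t^{↓(l+1)} = u^{↓l}, s^{↓(l+1)} →_{l+1} u^{↓l}, and dirreach(s^{↓(l+1)}) = dirreach(s)^{↓(l+1)}. -/
/-!
Partitions are modelled as functions `s : ℕ → ℕ` (0-based: `s 0` is the first
part `s_1`), nonincreasing and eventually zero.  A paper index `i ≥ 1`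
(columns, transitions `→_i`, increments `s^{↓i}`) corresponds to the Lean
index `i - 1`.
-/

/-- `s` is a partition: nonincreasing and eventually zero. -/
def IsPartition (s : ℕ → ℕ) : Prop :=
  (∀ i, s (i + 1) ≤ s i) ∧ ∃ N, ∀ i, N ≤ i → s i = 0

/-- `j`-th suffix sum (0-based: `suff s 0` is the total sum `|s|`,
`suff s (j-1)` is the paper's `Σ_j`). -/
noncomputable def suff (s : ℕ → ℕ) (j : ℕ) : ℕ := ∑' i, s (j + i)

/-- `s` is a partition of `n`. -/
noncomputable def IsPartOf (n : ℕ) (s : ℕ → ℕ) : Prop := IsPartition s ∧ suff s 0 = n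

/-- Prefix sum of the first `j` parts. -/
def psum (s : ℕ → ℕ) (j : ℕ) : ℕ := ∑ i ∈ Finset.range j, s i

/-- Dominance ordering: `Dom s t` means `s ≥ t`, i.e. every prefix sum of `s`
is at least the corresponding prefix sum of `t`. -/
def Dom (s t : ℕ → ℕ) : Prop := ∀ j, psum t j ≤ psum s j

/-- `s^{↓(i+1)}`: add one grain on the (0-based) `i`-th column. -/
def incr (s : ℕ → ℕ) (i : ℕ) : ℕ → ℕ := Function.update s i (s i + 1)

/-- Move one grain from column `a` to column `b` (0-based). -/
def moveGrain (s : ℕ → ℕ) (a b : ℕ) : ℕ → ℕ :=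
  fun j => if j = a then s a - 1 else if j = b then s b + 1 else s j

/-- `s` has a cliff at (0-based) column `i`: `s_i ≥ s_{i+1} + 2`. -/
def Cliff (s : ℕ → ℕ) (i : ℕ) : Prop := s (i + 1) + 2 ≤ s i

/-- `s` has a slippery step at (0-based) column `i`, the plateau ending at
(0-based) column `m`:  `s_i - 1 = s_{i+1} = ⋯ = s_m = s_{m+1} + 1` (in 0-based
indices), with `m ≥ i + 1`. -/
def SlipAt (s : ℕ → ℕ) (i m : ℕ) : Prop :=
  i + 1 ≤ m ∧ (∀ j, i + 1 ≤ j → j ≤ m → s j + 1 = s i) ∧ s (m + 1) + 2 = s i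

/-- The transition `s →_{i+1} t` of the paper (0-based `i`): a fall from a
cliff at `i`, or a slip from a slippery step at `i` (the grain landing just
after the plateau). -/
def Step (s : ℕ → ℕ) (i : ℕ) (t : ℕ → ℕ) : Prop :=
  (Cliff s i ∧ t = moveGrain s i (i + 1)) ∨
  (∃ m, SlipAt s i m ∧ t = moveGrain s i (m + 1))

/-- The set of configurations directly reachable from `s`. -/
def dirreach (s : ℕ → ℕ) : Set (ℕ → ℕ) := {t | ∃ i, Step s i t}

/-- `s` has a (slippery, if `l ≥ 2`) plateau of length `l` at `1`:
`s_1 = s_2 = ⋯ = s_l = s_{l+1} + 1`. -/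
def SlipperyPlateau1 (s : ℕ → ℕ) (l : ℕ) : Prop :=
  (∀ j, j < l → s j = s 0) ∧ s l + 1 = s 0

/-- `s` has a non-slippery plateau at `1`:
`s_1 = ⋯ = s_l ≥ s_{l+1} + 2` for some `l ≥ 2`. -/
def NonSlipperyPlateau1 (s : ℕ → ℕ) : Prop :=
  ∃ l, 2 ≤ l ∧ (∀ j, j < l → s j = s 0) ∧ s l + 2 ≤ s 0

/-- `s` has a slippery step at `1`. -/
def SlipperyStep1 (s : ℕ → ℕ) : Prop := ∃ m, SlipAt s 0 m

/-- `s` has a non-slippery step at `1`: `s_1 = s_2 + 1` and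
`s_2 = ⋯ = s_m ≥ s_{m+1} + 2` for some `m ≥ 2` (here `m` is 0-based, `≥ 1`). -/
def NonSlipperyStep1 (s : ℕ → ℕ) : Prop :=
  s 0 = s 1 + 1 ∧ ∃ m, 1 ≤ m ∧ (∀ j, 1 ≤ j → j ≤ m → s j = s 1) ∧ s (m + 1) + 2 ≤ s 1

/-- `c` is the infimum of `a` and `b` in the dominance lattice `L_B(n)`. -/
noncomputable def IsInfOn (n : ℕ) (a b c : ℕ → ℕ) : Prop :=
  IsPartOf n c ∧ Dom a c ∧ Dom b c ∧ ∀ d, IsPartOf n d → Dom a d → Dom b d → Dom c d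

/-- `c` is the supremum of `a` and `b` in the dominance lattice `L_B(n)`. -/
noncomputable def IsSupOn (n : ℕ) (a b c : ℕ → ℕ) : Prop :=
  IsPartOf n c ∧ Dom c a ∧ Dom c b ∧ ∀ d, IsPartOf n d → Dom d a → Dom d b → Dom d c

/-- The order `≥_∞` on the set `P` of all partitions: `GeInf s t` means
`s ≥_∞ t`, i.e. every suffix sum of `s` is at most that of `t`. -/
noncomputable def GeInf (s t : ℕ → ℕ) : Prop := ∀ j, suff s j ≤ suff t j

/-- `c` is the infimum of `a` and `b` in `(P, ≥_∞)`. -/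
noncomputable def IsInfP (a b c : ℕ → ℕ) : Prop :=
  IsPartition c ∧ GeInf a c ∧ GeInf b c ∧
    ∀ d, IsPartition d → GeInf a d → GeInf b d → GeInf c d

/-- `c` is the supremum of `a` and `b` in `(P, ≥_∞)`. -/
noncomputable def IsSupP (a b c : ℕ → ℕ) : Prop :=
  IsPartition c ∧ GeInf c a ∧ GeInf c b ∧
    ∀ d, IsPartition d → GeInf d a → GeInf d b → GeInf d c

/-- The map `π`: delete the first part, `(s_1, s_2, …) ↦ (s_2, …)`. -/
def shift (s : ℕ → ℕ) : ℕ → ℕ := fun i => s (i + 1)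

lemma incr_apply (s : ℕ → ℕ) (i j : ℕ) :
    incr s i j = if j = i then s i + 1 else s j := by
  simp [incr, Function.update_apply]

lemma incr_apply_ne (s : ℕ → ℕ) (l k : ℕ) (h : k ≠ l) : incr s l k = s k := by
  simp [incr_apply, h]

lemma incr_apply_self (s : ℕ → ℕ) (i : ℕ) : incr s i i = s i + 1 := by
  simp [incr_apply]

lemma moveGrain_fst (s : ℕ → ℕ) (a b : ℕ) : moveGrain s a b a = s a - 1 := by
  simp [moveGrain]

lemma moveGrain_snd (s : ℕ → ℕ) (a b : ℕ) (h : b ≠ a) : moveGrain s a b b = s b + 1 := by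
  simp [moveGrain, h]

lemma moveGrain_other (s : ℕ → ℕ) (a b j : ℕ) (h1 : j ≠ a) (h2 : j ≠ b) :
    moveGrain s a b j = s j := by
  simp [moveGrain, h1, h2]

lemma cliff_incr_iff (s : ℕ → ℕ) (l i : ℕ) (hi : l < i) :
    Cliff (incr s l) i ↔ Cliff s i := by
  unfold Cliff
  rw [incr_apply_ne s l i (by omega), incr_apply_ne s l (i+1) (by omega)]

lemma slipAt_incr_iff (s : ℕ → ℕ) (l i m : ℕ) (hi : l < i) :
    SlipAt (incr s l) i m ↔ SlipAt s i m := by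
  unfold SlipAt
  constructor
  · rintro ⟨h1, h2, h3⟩
    refine ⟨h1, fun j hj1 hj2 => ?_, ?_⟩
    · have := h2 j hj1 hj2
      rwa [incr_apply_ne s l j (by omega), incr_apply_ne s l i (by omega)] at this
    · rwa [incr_apply_ne s l (m+1) (by omega), incr_apply_ne s l i (by omega)] at h3
  · rintro ⟨h1, h2, h3⟩
    refine ⟨h1, fun j hj1 hj2 => ?_, ?_⟩
    · rw [incr_apply_ne s l j (by omega), incr_apply_ne s l i (by omega)]
      exact h2 j hj1 hj2
    · rw [incr_apply_ne s l (m+1) (by omega), incr_apply_ne s l i (by omega)]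
      exact h3

lemma moveGrain_incr_comm (s : ℕ → ℕ) (l i b : ℕ) (hi : l < i) (hb : l < b) :
    moveGrain (incr s l) i b = incr (moveGrain s i b) l := by
  funext j
  rcases eq_or_ne j l with rfl | hjl
  · rw [moveGrain_other _ _ _ _ hi.ne hb.ne, incr_apply_self, incr_apply_self,
      moveGrain_other _ _ _ _ hi.ne hb.ne]
  · rw [incr_apply_ne _ _ _ hjl]
    rcases eq_or_ne j i with rfl | hji
    · rw [moveGrain_fst, moveGrain_fst, incr_apply_ne _ _ _ hjl]
    · rcases eq_or_ne j b with rfl | hjb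
      · rw [moveGrain_snd _ _ _ hji, moveGrain_snd _ _ _ hji, incr_apply_ne _ _ _ hjl]
      · rw [moveGrain_other _ _ _ _ hji hjb, moveGrain_other _ _ _ _ hji hjb,
          incr_apply_ne _ _ _ hjl]

/-- If `s` has a slippery plateau of length `l ≥ 2` at `1`
and a cliff at `l+1`, with falls `s →_{l+1} t →_l u`, then
`t^{↓(l+1)} = u^{↓l}`, `s^{↓(l+1)} →_{l+1} u^{↓l}`, and
`dirreach(s^{↓(l+1)}) = dirreach(s)^{↓(l+1)}`. -/
theorem stmt9 (s t u : ℕ → ℕ) (l : ℕ) (hs : IsPartition s) (hl : 2 ≤ l)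
    (hp : SlipperyPlateau1 s l) (hc : Cliff s l)
    (ht : t = moveGrain s l (l + 1)) (hu : u = moveGrain t (l - 1) l) :
    incr t l = incr u (l - 1) ∧
    Step (incr s l) l (incr u (l - 1)) ∧
    dirreach (incr s l) = (fun v => incr v l) '' dirreach s := by
  obtain ⟨hmono, -⟩ := hs
  obtain ⟨h1, h2⟩ := hp
  have hc3 : s (l+1) + 3 ≤ s 0 := by have := hc; unfold Cliff at this; omega
  have hc2 : s (l+1) + 2 ≤ s l := hc
  have hsl1 : 1 ≤ s l := by omega
  have htl : t l = s l - 1 := by subst ht; exact moveGrain_fst _ _ _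
  have htl1 : t (l+1) = s (l+1) + 1 := by subst ht; exact moveGrain_snd _ _ _ (by omega)
  have hto : ∀ j, j ≠ l → j ≠ l + 1 → t j = s j := by
    intro j hj1 hj2; subst ht; exact moveGrain_other _ _ _ _ hj1 hj2
  have hll : l - 1 ≠ l := by omega
  have hul1 : u (l-1) = t (l-1) - 1 := by subst hu; exact moveGrain_fst _ _ _
  have hul : u l = t l + 1 := by subst hu; exact moveGrain_snd _ _ _ hll.symm
  have huo : ∀ j, j ≠ l - 1 → j ≠ l → u j = t j := by
    intro j hj1 hj2; subst hu; exact moveGrain_other _ _ _ _ hj1 hj2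
  have htlm1 : t (l-1) = s (l-1) := hto _ hll (by omega)
  have hslm1 : s (l-1) = s 0 := h1 _ (by omega)
  -- Part 1
  have part1 : incr t l = incr u (l - 1) := by
    funext j
    rcases eq_or_ne j l with rfl | hjl
    · rw [incr_apply_self, incr_apply_ne _ _ _ hll.symm, hul]
    · rcases eq_or_ne j (l-1) with rfl | hjm
      · rw [incr_apply_ne _ _ _ hll, incr_apply_self, hul1, htlm1]
        omega
      · rw [incr_apply_ne _ _ _ hjl, incr_apply_ne _ _ _ hjm, huo j hjm hjl]
  have hsil : incr s l l = s 0 := by rw [incr_apply_self]; omega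
  have hsio : ∀ j, j ≠ l → incr s l j = s j := fun j hj => incr_apply_ne s l j hj
  -- Part 2
  have key2 : moveGrain (incr s l) l (l+1) = incr t l := by
    funext j
    rcases eq_or_ne j l with rfl | hjl
    · rw [moveGrain_fst, hsil, incr_apply_self, htl]
      omega
    · rcases eq_or_ne j (l+1) with rfl | hjl1
      · rw [moveGrain_snd _ _ _ (by omega), hsio _ (by omega),
          incr_apply_ne _ _ _ (by omega), htl1]
      · rw [moveGrain_other _ _ _ _ hjl hjl1, hsio _ hjl, incr_apply_ne _ _ _ hjl,
          hto _ hjl hjl1]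
  have cliff' : Cliff (incr s l) l := by
    unfold Cliff
    rw [hsil, hsio _ (by omega)]
    omega
  have part2 : Step (incr s l) l (incr u (l - 1)) := by
    left
    exact ⟨cliff', by rw [key2, part1]⟩
  refine ⟨part1, part2, ?_⟩
  -- Part 3
  have noLow : ∀ i, i < l → ∀ v, ¬ Step s i v := by
    rintro i hil v (⟨hcf, -⟩ | ⟨m, ⟨hm1, hm2, hm3⟩, -⟩)
    · unfold Cliff at hcf
      have hsi : s i = s 0 := h1 _ hil
      by_cases h : i + 1 < l
      · have := h1 _ h; omega
      · have hh : i + 1 = l := by omega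
        rw [hh] at hcf; omega
    · have hsi : s i = s 0 := h1 _ hil
      by_cases h : i + 1 < l
      · have hj := hm2 (i+1) le_rfl (by omega)
        have := h1 _ h; omega
      · have hil1 : i + 1 = l := by omega
        by_cases hml : m = l
        · rw [hml] at hm3
          omega
        · have hml1 : l + 1 ≤ m := by omega
          have := hm2 (l+1) (by omega) hml1
          omega
  have stepL : ∀ v, Step s l v → v = t := by
    rintro v (⟨-, rfl⟩ | ⟨m, ⟨hm1, hm2, hm3⟩, -⟩)
    · exact ht.symm
    · have := hm2 (l+1) le_rfl hm1
      omega
  have hs'j : ∀ j, j ≤ l → incr s l j = s 0 := by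
    intro j hj
    rcases eq_or_ne j l with rfl | h
    · exact hsil
    · rw [hsio _ h]; exact h1 _ (by omega)
  have noLow' : ∀ i, i < l → ∀ v, ¬ Step (incr s l) i v := by
    rintro i hil v (⟨hcf, -⟩ | ⟨m, ⟨hm1, hm2, hm3⟩, -⟩)
    · unfold Cliff at hcf
      rw [hs'j i (by omega), hs'j (i+1) (by omega)] at hcf; omega
    · have h := hm2 (i+1) le_rfl (by omega)
      rw [hs'j i (by omega), hs'j (i+1) (by omega)] at h; omega
  have stepL' : ∀ v, Step (incr s l) l v → v = incr t l := by
    rintro v (⟨-, rfl⟩ | ⟨m, ⟨hm1, hm2, hm3⟩, -⟩)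
    · exact key2
    · have h := hm2 (l+1) le_rfl hm1
      rw [hs'j l le_rfl, hsio _ (by omega)] at h; omega
  ext v
  simp only [dirreach, Set.mem_setOf_eq, Set.mem_image]
  constructor
  · rintro ⟨i, hstep⟩
    rcases lt_trichotomy i l with h | heq | h
    · exact absurd hstep (noLow' i h v)
    · rw [heq] at hstep
      exact ⟨t, ⟨l, Or.inl ⟨hc, ht⟩⟩, (stepL' v hstep).symm⟩
    · rcases hstep with ⟨hcf, rfl⟩ | ⟨m, hsa, rfl⟩
      · exact ⟨moveGrain s i (i+1), ⟨i, Or.inl ⟨(cliff_incr_iff s l i h).1 hcf, rfl⟩⟩,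
          (moveGrain_incr_comm s l i (i+1) h (by omega)).symm⟩
      · have hm1 := hsa.1
        exact ⟨moveGrain s i (m+1), ⟨i, Or.inr ⟨m, (slipAt_incr_iff s l i m h).1 hsa, rfl⟩⟩,
          (moveGrain_incr_comm s l i (m+1) h (by omega)).symm⟩
  · rintro ⟨w, ⟨i, hstep⟩, rfl⟩
    rcases lt_trichotomy i l with h | heq | h
    · exact absurd hstep (noLow i h w)
    · rw [heq] at hstep
      rw [stepL w hstep]
      exact ⟨l, Or.inl ⟨cliff', key2.symm⟩⟩
    · rcases hstep with ⟨hcf, rfl⟩ | ⟨m, hsa, rfl⟩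
      · exact ⟨i, Or.inl ⟨(cliff_incr_iff s l i h).2 hcf,
          (moveGrain_incr_comm s l i (i+1) h (by omega)).symm⟩⟩
      · have hm1 := hsa.1
        exact ⟨i, Or.inr ⟨m, (slipAt_incr_iff s l i m h).2 hsa,
          (moveGrain_incr_comm s l i (m+1) h (by omega)).symm⟩⟩
end

section
/- Let n ≥ 1. The map π : L_B(n) → P sending a partition (s_1, s_2, …, s_k) of n to (s_2, …, s_k) is an injective lattice embedding: for all a, b ∈ L_B(n), π(inf_{L_B(n)}(a,b)) = inf_{(P,≥_∞)}(π(a), π(b)) and π(sup_{L_B(n)}(a,b)) = sup_{(P,≥_∞)}(π(a), π(b)). -/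
section Stmt13Aux

lemma anti_of_step {f : ℕ → ℕ} (h : ∀ j, f (j+1) ≤ f j) {i j : ℕ} (hij : i ≤ j) : f j ≤ f i := by
  obtain ⟨k, rfl⟩ := Nat.exists_eq_add_of_le hij
  induction k with
  | zero => exact le_rfl
  | succ m ih => exact le_trans (h (i + m)) (ih (by omega))

lemma suff_eq_sum {s : ℕ → ℕ} {N : ℕ} (h : ∀ i, N ≤ i → s i = 0) (j : ℕ) :
    suff s j = ∑ i ∈ Finset.range N, s (j + i) := by
  apply tsum_eq_sum
  intro i hi
  exact h (j + i) (by simp [Finset.mem_range] at hi; omega)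

lemma suff_rec {s : ℕ → ℕ} {N : ℕ} (h : ∀ i, N ≤ i → s i = 0) (j : ℕ) :
    suff s j = s j + suff s (j + 1) := by
  have h1 : suff s j = ∑ i ∈ Finset.range (N+1), s (j + i) :=
    suff_eq_sum (fun i hi => h i (by omega)) j
  rw [h1, Finset.sum_range_succ']
  rw [show j + 0 = j from rfl, add_comm]
  congr 1
  rw [suff_eq_sum h (j+1)]
  apply Finset.sum_congr rfl
  intro i _
  congr 1
  omega

lemma suff_vanish {s : ℕ → ℕ} {N : ℕ} (h : ∀ i, N ≤ i → s i = 0) {j : ℕ} (hj : N ≤ j) :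
    suff s j = 0 := by
  rw [suff_eq_sum h j]
  apply Finset.sum_eq_zero
  intro i _
  exact h _ (by omega)

lemma psum_add_suff {s : ℕ → ℕ} {N : ℕ} (h : ∀ i, N ≤ i → s i = 0) (j : ℕ) :
    psum s j + suff s j = suff s 0 := by
  induction j with
  | zero => simp [psum]
  | succ m ih =>
    have h1 := suff_rec h m
    have h2 : psum s (m+1) = psum s m + s m := Finset.sum_range_succ _ _
    omega

lemma suff_shift (s : ℕ → ℕ) (j : ℕ) : suff (shift s) j = suff s (j+1) := by
  unfold suff shift
  apply tsum_congr
  intro i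
  congr 1
  omega

lemma head_pos {s : ℕ → ℕ} (hs : IsPartition s) (hn : 1 ≤ suff s 0) : 1 ≤ s 0 := by
  by_contra h
  obtain ⟨N, hN⟩ := hs.2
  have hz : ∀ i, s i = 0 := fun i =>
    Nat.le_zero.mp (le_trans (anti_of_step hs.1 (Nat.zero_le i)) (by omega))
  have : suff s 0 = 0 := by
    rw [suff_eq_sum (N := 0) (fun i _ => hz i) 0]; simp
  omega

lemma psum_le_mul {s : ℕ → ℕ} (hs : ∀ j, s (j+1) ≤ s j) (j : ℕ) : psum s j ≤ j * s 0 := by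
  induction j with
  | zero => simp [psum]
  | succ m ih =>
    have h2 : psum s (m+1) = psum s m + s m := Finset.sum_range_succ _ _
    have h3 : s m ≤ s 0 := anti_of_step hs (Nat.zero_le m)
    have h4 : (m+1) * s 0 = m * s 0 + s 0 := by ring
    omega

lemma telescope' {E : ℕ → ℕ} (hmono : ∀ j, E (j+1) ≤ E j) (j M : ℕ) :
    ∑ i ∈ Finset.range M, (E (j+i) - E (j+i+1)) = E j - E (j+M) := by
  induction M with
  | zero => simp
  | succ m ih =>
    rw [Finset.sum_range_succ, ih]
    have h1 : E (j+m) ≤ E j := anti_of_step hmono (by omega)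
    have h2 : E (j+m+1) ≤ E (j+m) := hmono _
    have h3 : E (j + (m+1)) = E (j+m+1) := rfl
    rw [h3]
    omega

lemma mk_partition {E : ℕ → ℕ} (hmono : ∀ j, E (j+1) ≤ E j)
    (hconv : ∀ j, E (j+1) + E (j+1) ≤ E j + E (j+2))
    {N : ℕ} (hN : ∀ j, N ≤ j → E j = 0) :
    IsPartition (fun j => E j - E (j+1)) ∧
      (∀ j, suff (fun j => E j - E (j+1)) j = E j) := by
  have hz : ∀ i, N ≤ i → (fun j => E j - E (j+1)) i = 0 := fun i hi => by
    simp only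
    rw [hN i hi, hN (i+1) (by omega)]
  constructor
  · refine ⟨fun i => ?_, N, hz⟩
    have := hconv i; have := hmono i; have := hmono (i+1)
    simp only
    have h4 : E (i+1+1) = E (i+2) := rfl
    rw [h4]
    omega
  · intro j
    rw [suff_eq_sum hz j]
    rw [telescope' hmono j N, hN (j+N) (by omega)]
    omega

end Stmt13Aux

/-- For `n ≥ 1`, the map `π : L_B(n) → P`,
`(s_1, s_2, …) ↦ (s_2, …)`, is an injective lattice embedding: it maps
partitions of `n` to elements of `P`, is injective on `L_B(n)`, and sends
infima (resp. suprema) in `L_B(n)` to infima (resp. suprema) in `(P, ≥_∞)`. -/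


theorem stmt13 (n : ℕ) (hn : 1 ≤ n) :
    (∀ a, IsPartOf n a → IsPartition (shift a)) ∧
    (∀ a b : ℕ → ℕ, IsPartOf n a → IsPartOf n b → shift a = shift b → a = b) ∧
    (∀ a b c : ℕ → ℕ, IsPartOf n a → IsPartOf n b → IsInfOn n a b c →
      IsInfP (shift a) (shift b) (shift c)) ∧
    (∀ a b c : ℕ → ℕ, IsPartOf n a → IsPartOf n b → IsSupOn n a b c →
      IsSupP (shift a) (shift b) (shift c)) := by
  refine ⟨?_, ?_, ?_, ?_⟩
  · rintro a ⟨⟨hstep, N, hN⟩, -⟩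
    exact ⟨fun i => hstep (i+1), N, fun i hi => hN (i+1) (by omega)⟩
  · rintro a b ⟨⟨hsa, Na, hNa⟩, hsuma⟩ ⟨⟨hsb, Nb, hNb⟩, hsumb⟩ hab
    have h2 : suff a 1 = suff b 1 := by
      rw [← suff_shift a 0, ← suff_shift b 0, hab]
    have ha0 : suff a 0 = a 0 + suff a 1 := suff_rec hNa 0
    have hb0 : suff b 0 = b 0 + suff b 1 := suff_rec hNb 0
    funext i
    cases i with
    | zero => omega
    | succ m => exact congrFun hab m
  -- infima
  · rintro a b c ⟨⟨hsa, Na, hNa⟩, hsuma⟩ ⟨⟨hsb, Nb, hNb⟩, hsumb⟩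
      ⟨⟨⟨hsc, Nc, hNc⟩, hsumc⟩, hac, hbc, huniv⟩
    have areca := suff_rec hNa
    have brecb := suff_rec hNb
    set E : ℕ → ℕ := fun j => max (suff a j) (suff b j) with hEdef
    have hmono : ∀ j, E (j+1) ≤ E j := by
      intro j
      have h1 := areca j; have h2 := brecb j
      simp only [hEdef]
      omega
    have hconv : ∀ j, E (j+1) + E (j+1) ≤ E j + E (j+2) := by
      intro j
      have h1 := areca j
      have h2 : suff a (j+1) = a (j+1) + suff a (j+2) := suff_rec hNa (j+1)
      have h3 := brecb j
      have h4 : suff b (j+1) = b (j+1) + suff b (j+2) := suff_rec hNb (j+1)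
      have h5 := hsa j; have h6 := hsb j
      simp only [hEdef]
      omega
    have hNE : ∀ j, max Na Nb ≤ j → E j = 0 := by
      intro j hj
      have h1 : suff a j = 0 := suff_vanish hNa (by omega)
      have h2 : suff b j = 0 := suff_vanish hNb (by omega)
      simp only [hEdef]
      omega
    obtain ⟨hparte, hsuffe⟩ := mk_partition hmono hconv hNE
    obtain ⟨hse, Ne, hNe⟩ := hparte
    have pe := psum_add_suff hNe
    have pa := psum_add_suff hNa
    have pb := psum_add_suff hNb
    have pc := psum_add_suff hNc
    have hsume : suff (fun j => E j - E (j+1)) 0 = n := by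
      rw [hsuffe 0]
      simp only [hEdef]
      omega
    have hDomae : Dom a (fun j => E j - E (j+1)) := by
      intro j
      have h1 := pa j; have h2 := pe j
      rw [hsuffe j] at h2
      have h3 : suff a j ≤ E j := by simp only [hEdef]; omega
      omega
    have hDombe : Dom b (fun j => E j - E (j+1)) := by
      intro j
      have h1 := pb j; have h2 := pe j
      rw [hsuffe j] at h2
      have h3 : suff b j ≤ E j := by simp only [hEdef]; omega
      omega
    have hDomce : Dom c (fun j => E j - E (j+1)) :=
      huniv _ ⟨⟨hse, Ne, hNe⟩, hsume⟩ hDomae hDombe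
    refine ⟨⟨fun i => hsc (i+1), Nc, fun i hi => hNc (i+1) (by omega)⟩, ?_, ?_, ?_⟩
    · intro j
      rw [suff_shift, suff_shift]
      have h1 := hac (j+1); have h2 := pa (j+1); have h3 := pc (j+1)
      omega
    · intro j
      rw [suff_shift, suff_shift]
      have h1 := hbc (j+1); have h2 := pb (j+1); have h3 := pc (j+1)
      omega
    · intro d hd hda hdb
      intro j
      rw [suff_shift]
      have h1 := hda j; have h2 := hdb j
      rw [suff_shift] at h1 h2
      have h3 := hDomce (j+1)
      have h4 := pc (j+1); have h5 := pe (j+1)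
      rw [hsuffe (j+1)] at h5
      have h6 : E (j+1) = max (suff a (j+1)) (suff b (j+1)) := by simp only [hEdef]
      omega
  -- suprema
  · rintro a b c ⟨⟨hsa, Na, hNa⟩, hsuma⟩ ⟨⟨hsb, Nb, hNb⟩, hsumb⟩
      ⟨⟨⟨hsc, Nc, hNc⟩, hsumc⟩, hca, hcb, huniv⟩
    have pa := psum_add_suff hNa
    have pb := psum_add_suff hNb
    have pc := psum_add_suff hNc
    refine ⟨⟨fun i => hsc (i+1), Nc, fun i hi => hNc (i+1) (by omega)⟩, ?_, ?_, ?_⟩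
    · intro j
      rw [suff_shift, suff_shift]
      have h1 := hca (j+1); have h2 := pa (j+1); have h3 := pc (j+1)
      omega
    · intro j
      rw [suff_shift, suff_shift]
      have h1 := hcb (j+1); have h2 := pb (j+1); have h3 := pc (j+1)
      omega
    · rintro d ⟨hsd, Nd, hNd⟩ hda hdb
      have drec := suff_rec hNd
      have hdmono : ∀ j, suff d (j+1) ≤ suff d j := fun j => by have := drec j; omega
      have ha0 : 1 ≤ a 0 := head_pos ⟨hsa, Na, hNa⟩ (by omega)
      have hD0a : suff d 0 ≤ suff a 1 := by have := hda 0; rwa [suff_shift] at this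
      have hA1 : suff a 0 = a 0 + suff a 1 := suff_rec hNa 0
      have hd0n : suff d 0 ≤ n := by omega
      set σ := n - suff d 0 with hσdef
      have hσa : a 0 ≤ σ := by omega
      have hσ1 : 1 ≤ σ := by omega
      set E : ℕ → ℕ := fun j => max (if j = 0 then n else suff d (j-1)) (n - j * σ)
        with hEdef
      have hE0 : E 0 = n := by simp [hEdef]
      have hEsucc : ∀ j, E (j+1) = max (suff d j) (n - (j+1) * σ) := by
        intro j; simp [hEdef]
      have hmonoE : ∀ j, E (j+1) ≤ E j := by
        intro j
        cases j with
        | zero =>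
          rw [hEsucc 0, hE0]
          have h1 : 1 * σ = σ := one_mul σ
          rw [h1]
          omega
        | succ k =>
          rw [hEsucc k, hEsucc (k+1)]
          have h2 : suff d (k+1) ≤ suff d k := hdmono k
          have h1 : (k+1+1) * σ = (k+1) * σ + σ := by ring
          generalize hq : (k+1+1) * σ = q at h1 ⊢
          generalize hp : (k+1) * σ = p at h1 ⊢
          omega
      have hconvE : ∀ j, E (j+1) + E (j+1) ≤ E j + E (j+2) := by
        intro j
        cases j with
        | zero =>
          rw [hEsucc 0, hEsucc 1, hE0]
          have h1 : 1 * σ = σ := one_mul σ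
          have h2 : (1+1) * σ = σ + σ := by ring
          rw [h1, h2]
          have h3 : suff d 1 ≤ suff d 0 := hdmono 0
          omega
        | succ k =>
          rw [hEsucc k, hEsucc (k+1), hEsucc (k+2)]
          have h3 := drec k
          have h4 : suff d (k+1) = d (k+1) + suff d (k+2) := suff_rec hNd (k+1)
          have h6 := hsd k
          have l1 : (k+1+1) * σ = (k+1) * σ + σ := by ring
          have l2 : (k+2+1) * σ = (k+1) * σ + σ + σ := by ring
          generalize hq : (k+2+1) * σ = r at l2 ⊢
          generalize hp : (k+1+1) * σ = q at l1 ⊢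
          generalize hr : (k+1) * σ = p at l1 l2 ⊢
          omega
      have hNE : ∀ j, max (Nd + 1) n ≤ j → E j = 0 := by
        intro j hj
        cases j with
        | zero => omega
        | succ k =>
          rw [hEsucc k]
          have h1 : suff d k = 0 := suff_vanish hNd (by omega)
          have h2 : k+1 ≤ (k+1) * σ := Nat.le_mul_of_pos_right _ (by omega)
          generalize hp : (k+1) * σ = p at h2 ⊢
          omega
      have hEa : ∀ j, E j ≤ suff a j := by
        intro j
        cases j with
        | zero => rw [hE0]; omega
        | succ k =>
          rw [hEsucc k]
          have h1 := hda k
          rw [suff_shift] at h1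
          have h2 : psum a (k+1) ≤ (k+1) * a 0 := psum_le_mul hsa (k+1)
          have h3 : (k+1) * a 0 ≤ (k+1) * σ := Nat.mul_le_mul_left _ hσa
          have h4 := pa (k+1)
          generalize hp : (k+1) * σ = p at h3 ⊢
          generalize hq : (k+1) * a 0 = q at h2 h3
          omega
      have hEb : ∀ j, E j ≤ suff b j := by
        intro j
        cases j with
        | zero => rw [hE0]; omega
        | succ k =>
          rw [hEsucc k]
          have h1 := hdb k
          rw [suff_shift] at h1
          have hb0 : 1 ≤ b 0 := head_pos ⟨hsb, Nb, hNb⟩ (by omega)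
          have hD0b : suff d 0 ≤ suff b 1 := by have := hdb 0; rwa [suff_shift] at this
          have hB1 : suff b 0 = b 0 + suff b 1 := suff_rec hNb 0
          have hσb : b 0 ≤ σ := by omega
          have h2 : psum b (k+1) ≤ (k+1) * b 0 := psum_le_mul hsb (k+1)
          have h3 : (k+1) * b 0 ≤ (k+1) * σ := Nat.mul_le_mul_left _ hσb
          have h4 := pb (k+1)
          generalize hp : (k+1) * σ = p at h3 ⊢
          generalize hq : (k+1) * b 0 = q at h2 h3
          omega
      obtain ⟨hparte, hsuffe⟩ := mk_partition hmonoE hconvE hNE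
      obtain ⟨hse, Ne, hNe⟩ := hparte
      have pe := psum_add_suff hNe
      have hsume : suff (fun j => E j - E (j+1)) 0 = n := by rw [hsuffe 0, hE0]
      have hDomea : Dom (fun j => E j - E (j+1)) a := by
        intro j
        have h1 := hEa j; have h2 := pa j; have h3 := pe j
        rw [hsuffe j] at h3
        rw [hsume] at h3
        omega
      have hDomeb : Dom (fun j => E j - E (j+1)) b := by
        intro j
        have h1 := hEb j; have h2 := pb j; have h3 := pe j
        rw [hsuffe j] at h3
        rw [hsume] at h3
        omega
      have hDomec : Dom (fun j => E j - E (j+1)) c :=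
        huniv _ ⟨⟨hse, Ne, hNe⟩, hsume⟩ hDomea hDomeb
      intro j
      rw [suff_shift]
      have h1 := hDomec (j+1)
      have h2 := pc (j+1)
      have h3 := pe (j+1)
      rw [hsuffe (j+1)] at h3
      rw [hsume] at h3
      have h4 := hEsucc j
      generalize hp : (j+1) * σ = p at h4
      omega
end
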